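/- For all real numbers t and s, lim_{k→∞} C_k · k^t · η_k^{2k+s} = 0. -/

import Mathlib

open Filter Set

/-- `C_k = (2k-2)!/(k-1)!` as a real number. -/
noncomputable def Cc (k : ℕ) : ℝ :=
  ((2 * k - 2).factorial : ℝ) / ((k - 1).factorial : ℝ)

/-- `p_k(z) = 1 − 2z − (7+8k)z²`. -/
noncomputable def Pp (k : ℕ) (z : ℝ) : ℝ := 1 - 2 * z - (7 + 8 * k) * z ^ 2

/-- `h_k(z) = 1 − z − C_k·z^{2k+1}`. -/
noncomputable def Hh (k : ℕ) (z : ℝ) : ℝ := 1 - z - Cc k * z ^ (2 * k + 1)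

/-- `Δ_k(z) = p_k(z) + 4·C_k·z^{2k+1}·h_k(z)`. -/
noncomputable def Dd (k : ℕ) (z : ℝ) : ℝ :=
  Pp k z + 4 * Cc k * z ^ (2 * k + 1) * Hh k z

/-- `g_k(z) = 2 − C_k·z^{2k−1}·(h_k(z) − C_k·z^{2k−1})`. -/
noncomputable def Gg (k : ℕ) (z : ℝ) : ℝ :=
  2 - Cc k * z ^ (2 * k - 1) * (Hh k z - Cc k * z ^ (2 * k - 1))

/-- `ρ_k = 1/(1+√(8+8k))`, the positive root of `p_k`. -/
noncomputable def rho (k : ℕ) : ℝ := 1 / (1 + Real.sqrt (8 + 8 * k))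

/-- `ψ_k(x) = −x·Δ_k′(x)`. -/
noncomputable def psi (k : ℕ) (x : ℝ) : ℝ := -x * deriv (Dd k) x

/-- `η` is a root of `Δ_k` in the interval `(0, 1/√(8+8k))`, and is the unique such root. -/
def IsEta (k : ℕ) (η : ℝ) : Prop :=
  η ∈ Set.Ioo (0 : ℝ) (1 / Real.sqrt (8 + 8 * k)) ∧ Dd k η = 0 ∧
    ∀ x ∈ Set.Ioo (0 : ℝ) (1 / Real.sqrt (8 + 8 * k)), Dd k x = 0 → x = η

lemma fact_add_le (n m : ℕ) : (n + m).factorial ≤ n.factorial * (n + m) ^ m := by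
  induction m with
  | zero => simp
  | succ m ih =>
    have h1 : (n + (m + 1)).factorial = (n + m + 1) * (n + m).factorial := by
      rw [show n + (m + 1) = (n + m) + 1 from rfl, Nat.factorial_succ]
    have h2 : (n + m) ^ m ≤ (n + m + 1) ^ m := Nat.pow_le_pow_left (by omega) m
    calc (n + (m + 1)).factorial = (n + m + 1) * (n + m).factorial := h1
      _ ≤ (n + m + 1) * (n.factorial * (n + m) ^ m) := Nat.mul_le_mul_left _ ih
      _ ≤ (n + m + 1) * (n.factorial * (n + m + 1) ^ m) := by
          exact Nat.mul_le_mul_left _ (Nat.mul_le_mul_left _ h2)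
      _ = n.factorial * (n + (m + 1)) ^ (m + 1) := by
          rw [show n + (m + 1) = n + m + 1 from rfl, pow_succ]; ring

lemma Cc_pos (k : ℕ) : 0 < Cc k := by
  unfold Cc
  positivity

lemma Cc_le (k : ℕ) (hk : 2 ≤ k) : Cc k ≤ (2 * (k : ℝ)) ^ (k - 1) := by
  have h := fact_add_le (k - 1) (k - 1)
  have e : (k - 1) + (k - 1) = 2 * k - 2 := by omega
  rw [e] at h
  have hfpos : (0 : ℝ) < ((k - 1).factorial : ℝ) := by positivity
  rw [Cc, div_le_iff₀ hfpos]
  have hcast : ((2 * k - 2).factorial : ℝ) ≤ ((k - 1).factorial : ℝ) * ((2 * k - 2 : ℕ) : ℝ) ^ (k - 1) := by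
    exact_mod_cast h
  refine hcast.trans ?_
  have hbase : ((2 * k - 2 : ℕ) : ℝ) ≤ 2 * (k : ℝ) := by
    have : ((2 * k - 2 : ℕ) : ℝ) = 2 * (k : ℝ) - 2 := by
      push_cast [Nat.cast_sub (by omega : 2 ≤ 2 * k)]; ring
    rw [this]; linarith
  have hp : ((2 * k - 2 : ℕ) : ℝ) ^ (k - 1) ≤ (2 * (k : ℝ)) ^ (k - 1) :=
    pow_le_pow_left₀ (by positivity) hbase _
  nlinarith [hfpos, pow_nonneg (show (0:ℝ) ≤ ((2 * k - 2 : ℕ) : ℝ) by positivity) (k-1)]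

lemma pow_trick (k : ℕ) (hk : 2 ≤ k) :
    (2 * (k : ℝ)) ^ (k - 1) * (1 / (8 * (k : ℝ))) ^ k ≤ (1 / 4 : ℝ) ^ k := by
  have hk0 : (0 : ℝ) < k := by exact_mod_cast Nat.lt_of_lt_of_le (by norm_num) hk
  have h2k : (0 : ℝ) < 2 * k := by linarith
  have e1 : (2 * (k : ℝ)) ^ (k - 1) * (2 * (k : ℝ)) = (2 * (k : ℝ)) ^ k := by
    rw [← pow_succ]; congr 1; omega
  have e2 : (8 * (k : ℝ)) ^ k = (2 * (k : ℝ)) ^ k * 4 ^ k := by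
    rw [show (8 : ℝ) * k = (2 * k) * 4 by ring, mul_pow]
  have hlhs : (2 * (k : ℝ)) ^ (k - 1) * (1 / (8 * (k : ℝ))) ^ k
      = 1 / (2 * (k : ℝ)) * (1 / 4 : ℝ) ^ k := by
    simp only [div_pow, one_pow]
    rw [e2]
    field_simp
    rw [← e1]
    ring
  rw [hlhs]
  have h14 : (0 : ℝ) < (1 / 4 : ℝ) ^ k := by positivity
  have : 1 / (2 * (k : ℝ)) ≤ 1 := by
    rw [div_le_one h2k]
    have hk1 : (1 : ℝ) ≤ k := Nat.one_le_cast.mpr (by omega)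
    linarith
  nlinarith

lemma interval_facts (k : ℕ) (hk : 2 ≤ k) {x : ℝ} (hx0 : 0 < x)
    (hxe : x < 1 / Real.sqrt (8 + 8 * k)) :
    x < 1 ∧ x ^ 2 ≤ 1 / (8 * (k : ℝ)) := by
  have ha : (0 : ℝ) < 8 + 8 * k := by positivity
  have hs1 : 1 ≤ Real.sqrt (8 + 8 * k) := Real.one_le_sqrt.mpr (by linarith)
  have hk0 : (0 : ℝ) < k := by exact_mod_cast Nat.lt_of_lt_of_le (by norm_num) hk
  constructor
  · calc x < 1 / Real.sqrt (8 + 8 * k) := hxe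
      _ ≤ 1 := by rw [div_le_one (by linarith)]; exact hs1
  · have h1 : x ^ 2 ≤ (1 / Real.sqrt (8 + 8 * k)) ^ 2 :=
      pow_le_pow_left₀ hx0.le hxe.le 2
    have h2 : (1 / Real.sqrt (8 + 8 * k)) ^ 2 = 1 / (8 + 8 * (k : ℝ)) := by
      rw [div_pow, one_pow, Real.sq_sqrt ha.le]
    have h3 : 1 / (8 + 8 * (k : ℝ)) ≤ 1 / (8 * k) := by
      apply one_div_le_one_div_of_le (by linarith)
      linarith
    linarith

lemma B_bound (k : ℕ) (hk : 2 ≤ k) {x : ℝ} (hx0 : 0 < x)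
    (hxe : x < 1 / Real.sqrt (8 + 8 * k)) :
    Cc k * x ^ (2 * k + 1) ≤ 1 / 16 := by
  obtain ⟨hx1, hx2⟩ := interval_facts k hk hx0 hxe
  have e : x ^ (2 * k + 1) = (x ^ 2) ^ k * x := by
    rw [← pow_mul, ← pow_succ]
  rw [e, ← mul_assoc]
  have h1 : Cc k * (x ^ 2) ^ k ≤ (2 * (k : ℝ)) ^ (k - 1) * (1 / (8 * k)) ^ k := by
    apply mul_le_mul (Cc_le k hk) (pow_le_pow_left₀ (by positivity) hx2 k)
      (by positivity) (by positivity)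
  have h2 : Cc k * (x ^ 2) ^ k * x ≤ Cc k * (x ^ 2) ^ k := by
    nlinarith [mul_nonneg (Cc_pos k).le (pow_nonneg (sq_nonneg x) k), hx1, hx0]
  have h3 : ((1 : ℝ) / 4) ^ k ≤ (1 / 4 : ℝ) ^ 2 :=
    pow_le_pow_of_le_one (by norm_num) (by norm_num) hk
  have := pow_trick k hk
  norm_num at h3 ⊢
  linarith

lemma eta_lb (k : ℕ) (hk : 2 ≤ k) {x : ℝ} (hIs : IsEta k x) :
    1 / (8 * Real.sqrt k) ≤ x := by
  obtain ⟨⟨hx0, hxe⟩, hroot, -⟩ := hIs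
  obtain ⟨hx1, hx2⟩ := interval_facts k hk hx0 hxe
  by_contra hcon
  push_neg at hcon
  have hk0 : (0 : ℝ) < k := by exact_mod_cast Nat.lt_of_lt_of_le (by norm_num) hk
  have hk1 : (1 : ℝ) ≤ k := Nat.one_le_cast.mpr (by omega)
  have hsk1 : 1 ≤ Real.sqrt (k : ℝ) := Real.one_le_sqrt.mpr hk1
  set B := Cc k * x ^ (2 * k + 1) with hB
  have hB0 : 0 ≤ B := mul_nonneg (Cc_pos k).le (pow_nonneg hx0.le _)
  have hB16 : B ≤ 1 / 16 := B_bound k hk hx0 hxe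
  have e : Dd k x = 1 - 2 * x - (7 + 8 * (k : ℝ)) * x ^ 2 + 4 * B * (1 - x - B) := by
    simp only [Dd, Pp, Hh, hB]; ring
  rw [e] at hroot
  have t1 : x < 1 / 8 := by
    refine hcon.trans_le ?_
    rw [div_le_div_iff₀ (by positivity) (by norm_num)]
    nlinarith
  have t2 : x ^ 2 < 1 / (64 * (k : ℝ)) := by
    have h1 : x ^ 2 < (1 / (8 * Real.sqrt k)) ^ 2 := by
      apply pow_lt_pow_left₀ hcon hx0.le two_ne_zero
    have h2 : (1 / (8 * Real.sqrt (k : ℝ))) ^ 2 = 1 / (64 * k) := by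
      rw [div_pow, one_pow, mul_pow, Real.sq_sqrt hk0.le]
      norm_num
    linarith
  have t3 : (7 + 8 * (k : ℝ)) * x ^ 2 ≤ 15 / 64 := by
    have h15 : 15 * (k : ℝ) * (1 / (64 * k)) = 15 / 64 := by
      field_simp
    nlinarith [sq_nonneg x, mul_le_mul_of_nonneg_left t2.le (show (0:ℝ) ≤ 15 * k by positivity)]
  have t4 : -(1 / 64 : ℝ) ≤ 4 * B * (1 - x - B) := by
    nlinarith [mul_nonneg hB0 (show (0:ℝ) ≤ 1 - x - B + 1 / 16 by linarith)]
  linarith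

/-- For all real numbers `t` and `s`, `lim_{k→∞} C_k·k^t·η_k^{2k+s} = 0`,
where `η_k` is the unique root of `Δ_k` in the real interval `(0, 1/√(8+8k))`. -/
theorem statement9 (η : ℕ → ℝ) (hη : ∀ k, 2 ≤ k → IsEta k (η k)) (t s : ℝ) :
    Tendsto (fun k : ℕ => Cc k * (k : ℝ) ^ t * η k ^ (2 * (k : ℝ) + s))
      atTop (nhds 0) := by
  set d : ℕ := ⌈t + |s| / 2⌉₊ with hd
  have hgeo : Tendsto (fun k : ℕ => (8 : ℝ) ^ |s| * ((k : ℝ) ^ d * (1 / 4 : ℝ) ^ k))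
      atTop (nhds 0) := by
    have h := (summable_pow_mul_geometric_of_norm_lt_one (R := ℝ) d
      (r := 1 / 4) (by rw [Real.norm_eq_abs, abs_of_nonneg (by norm_num : (0:ℝ) ≤ 1/4)]; norm_num)).tendsto_atTop_zero
    simpa using h.const_mul ((8 : ℝ) ^ |s|)
  refine squeeze_zero' ?_ ?_ hgeo
  · filter_upwards [eventually_ge_atTop 2] with k hk
    obtain ⟨⟨hx0, hxe⟩, -, -⟩ := hη k hk
    exact mul_nonneg (mul_nonneg (Cc_pos k).le (Real.rpow_nonneg (Nat.cast_nonneg k) t))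
      (Real.rpow_nonneg hx0.le _)
  · filter_upwards [eventually_ge_atTop 2] with k hk
    have hIs := hη k hk
    have hlb := eta_lb k hk hIs
    obtain ⟨⟨hx0, hxe⟩, -, -⟩ := hIs
    obtain ⟨hx1, hx2⟩ := interval_facts k hk hx0 hxe
    set x := η k
    have hk0 : (0 : ℝ) < k := by exact_mod_cast Nat.lt_of_lt_of_le (by norm_num) hk
    have hk1 : (1 : ℝ) ≤ k := Nat.one_le_cast.mpr (by omega)
    have hsk1 : 1 ≤ Real.sqrt (k : ℝ) := Real.one_le_sqrt.mpr hk1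
    have hsk0 : (0 : ℝ) < Real.sqrt k := by linarith
    have he : x ^ (2 * (k : ℝ) + s) = (x ^ 2) ^ k * x ^ s := by
      rw [show 2 * (k : ℝ) + s = ((2 * k : ℕ) : ℝ) + s by push_cast; ring,
        Real.rpow_add hx0, Real.rpow_natCast, pow_mul]
    have hA : Cc k * (x ^ 2) ^ k ≤ (1 / 4 : ℝ) ^ k := by
      refine le_trans ?_ (pow_trick k hk)
      exact mul_le_mul (Cc_le k hk) (pow_le_pow_left₀ (by positivity) hx2 k)
        (by positivity) (by positivity)
    have hrhs_eq : (8 * Real.sqrt k) ^ |s| = (8 : ℝ) ^ |s| * (k : ℝ) ^ (|s| / 2) := by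
      rw [Real.mul_rpow (by norm_num) (Real.sqrt_nonneg _)]
      congr 1
      rw [Real.sqrt_eq_rpow, ← Real.rpow_mul (Nat.cast_nonneg k)]
      congr 1
      ring
    have hxs : x ^ s ≤ (8 : ℝ) ^ |s| * (k : ℝ) ^ (|s| / 2) := by
      rw [← hrhs_eq]
      rcases le_or_gt 0 s with hs | hs
      · have h1 : x ^ s ≤ 1 := Real.rpow_le_one hx0.le hx1.le hs
        have h2 : (1 : ℝ) ≤ (8 * Real.sqrt k) ^ |s| :=
          Real.one_le_rpow (by nlinarith) (abs_nonneg s)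
        linarith
      · have hlb0 : (0 : ℝ) < 1 / (8 * Real.sqrt k) := by positivity
        have h1 : x ^ s ≤ (1 / (8 * Real.sqrt k)) ^ s :=
          Real.rpow_le_rpow_of_nonpos hlb0 hlb hs.le
        have h2 : (1 / (8 * Real.sqrt (k : ℝ))) ^ s = (8 * Real.sqrt k) ^ (-s) := by
          rw [one_div, Real.inv_rpow (by positivity), ← Real.rpow_neg (by positivity)]
        rw [abs_of_neg hs]
        rw [h2] at h1
        exact h1
    have hB2 : (k : ℝ) ^ t * x ^ s ≤ (8 : ℝ) ^ |s| * (k : ℝ) ^ (t + |s| / 2) := by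
      have h1 : (k : ℝ) ^ t * x ^ s ≤ (k : ℝ) ^ t * ((8 : ℝ) ^ |s| * (k : ℝ) ^ (|s| / 2)) :=
        mul_le_mul_of_nonneg_left hxs (Real.rpow_nonneg hk0.le t)
      have h2 : (k : ℝ) ^ (t + |s| / 2) = (k : ℝ) ^ t * (k : ℝ) ^ (|s| / 2) :=
        Real.rpow_add hk0 t (|s| / 2)
      rw [h2]; linarith [h1]
    have hC : (k : ℝ) ^ (t + |s| / 2) ≤ (k : ℝ) ^ (d : ℕ) := by
      have h := Real.rpow_le_rpow_of_exponent_le hk1 (Nat.le_ceil (t + |s| / 2))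
      rwa [Real.rpow_natCast] at h
    calc Cc k * (k : ℝ) ^ t * x ^ (2 * (k : ℝ) + s)
        = (Cc k * (x ^ 2) ^ k) * ((k : ℝ) ^ t * x ^ s) := by rw [he]; ring
      _ ≤ (1 / 4 : ℝ) ^ k * ((8 : ℝ) ^ |s| * (k : ℝ) ^ (t + |s| / 2)) := by
          refine mul_le_mul hA hB2 ?_ (by positivity)
          exact mul_nonneg (Real.rpow_nonneg hk0.le t) (Real.rpow_nonneg hx0.le s)
      _ ≤ (1 / 4 : ℝ) ^ k * ((8 : ℝ) ^ |s| * (k : ℝ) ^ (d : ℕ)) := by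
          have h8 : (0 : ℝ) ≤ (8 : ℝ) ^ |s| := Real.rpow_nonneg (by norm_num) _
          have h14 : (0 : ℝ) ≤ (1 / 4 : ℝ) ^ k := by positivity
          exact mul_le_mul_of_nonneg_left (mul_le_mul_of_nonneg_left hC h8) h14
      _ = (8 : ℝ) ^ |s| * ((k : ℝ) ^ d * (1 / 4 : ℝ) ^ k) := by ring
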